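/- Let G = SL₃(ℂ) and let H ⊆ G be the subgroup of all matrices of the form [[t,0,a],[0,1,b],[0,0,t⁻¹]] with t ∈ ℂˣ and a,b ∈ ℂ. Then the normalizer N_G(H) of H in G equals the subgroup K of all matrices of the form [[t₁,0,a],[0,t₂,b],[0,0,t₃]] with a,b ∈ ℂ and t₁t₂t₃ = 1. -/

import Mathlib

open Matrix

set_option maxHeartbeats 2000000 in
/-- For `G = SL₃(ℂ)`, the normalizer of the subgroup `H` of matrices
`[[t,0,a],[0,1,b],[0,0,t⁻¹]]` (with `t ∈ ℂˣ`, `a, b ∈ ℂ`) equals the subgroup `K` of matrices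
`[[t₁,0,a],[0,t₂,b],[0,0,t₃]]` with `t₁t₂t₃ = 1`. -/
theorem normalizer_of_H_eq_K
    (H K : Subgroup (Matrix.SpecialLinearGroup (Fin 3) ℂ))
    (hH : ∀ g : Matrix.SpecialLinearGroup (Fin 3) ℂ, g ∈ H ↔
      ∃ (t : ℂˣ) (a b : ℂ),
        (g : Matrix (Fin 3) (Fin 3) ℂ) = !![(t : ℂ), 0, a; 0, 1, b; 0, 0, (t : ℂ)⁻¹])
    (hK : ∀ g : Matrix.SpecialLinearGroup (Fin 3) ℂ, g ∈ K ↔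
      ∃ (t₁ t₂ t₃ a b : ℂ), t₁ * t₂ * t₃ = 1 ∧
        (g : Matrix (Fin 3) (Fin 3) ℂ) = !![t₁, 0, a; 0, t₂, b; 0, 0, t₃]) :
    Subgroup.normalizer (H : Set (Matrix.SpecialLinearGroup (Fin 3) ℂ)) = K := by
  apply le_antisymm
  · -- normalizer ≤ K
    intro g hg
    rw [Subgroup.mem_normalizer_iff] at hg
    set A : Matrix (Fin 3) (Fin 3) ℂ := (g : Matrix (Fin 3) (Fin 3) ℂ) with hAdef
    set B : Matrix (Fin 3) (Fin 3) ℂ := ((g⁻¹ : Matrix.SpecialLinearGroup (Fin 3) ℂ) : Matrix (Fin 3) (Fin 3) ℂ) with hBdef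
    have hAB : A * B = 1 := by
      rw [hAdef, hBdef, ← Matrix.SpecialLinearGroup.coe_mul, mul_inv_cancel]; simp
    have hBA : B * A = 1 := by
      rw [hBdef, hAdef, ← Matrix.SpecialLinearGroup.coe_mul, inv_mul_cancel]; simp
    -- three test elements of H
    have hdet1 : Matrix.det (!![1,0,1;0,1,0;0,0,1] : Matrix (Fin 3) (Fin 3) ℂ) = 1 := by
      simp [Matrix.det_fin_three]
    have hdet2 : Matrix.det (!![1,0,0;0,1,1;0,0,1] : Matrix (Fin 3) (Fin 3) ℂ) = 1 := by
      simp [Matrix.det_fin_three]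
    have hdet3 : Matrix.det (!![2,0,0;0,1,0;0,0,2⁻¹] : Matrix (Fin 3) (Fin 3) ℂ) = 1 := by
      simp [Matrix.det_fin_three]
    have hn1 : (show Matrix.SpecialLinearGroup (Fin 3) ℂ from ⟨_, hdet1⟩) ∈ H := by
      rw [hH]; exact ⟨1, 1, 0, by norm_num⟩
    have hn2 : (show Matrix.SpecialLinearGroup (Fin 3) ℂ from ⟨_, hdet2⟩) ∈ H := by
      rw [hH]; exact ⟨1, 0, 1, by norm_num⟩
    have hn3 : (show Matrix.SpecialLinearGroup (Fin 3) ℂ from ⟨_, hdet3⟩) ∈ H := by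
      rw [hH]; refine ⟨Units.mk0 2 two_ne_zero, 0, 0, by norm_num⟩
    obtain ⟨u1, a1, b1, hE1⟩ := (hH _).1 ((hg _).1 hn1)
    obtain ⟨u2, a2, b2, hE2⟩ := (hH _).1 ((hg _).1 hn2)
    obtain ⟨u3, a3, b3, hE3⟩ := (hH _).1 ((hg _).1 hn3)
    rw [Matrix.SpecialLinearGroup.coe_mul, Matrix.SpecialLinearGroup.coe_mul, ← hAdef, ← hBdef] at hE1 hE2 hE3
    have hc1 : ((show Matrix.SpecialLinearGroup (Fin 3) ℂ from ⟨_, hdet1⟩) : Matrix (Fin 3) (Fin 3) ℂ) = !![1,0,1;0,1,0;0,0,1] := rfl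
    have hc2 : ((show Matrix.SpecialLinearGroup (Fin 3) ℂ from ⟨_, hdet2⟩) : Matrix (Fin 3) (Fin 3) ℂ) = !![1,0,0;0,1,1;0,0,1] := rfl
    have hc3 : ((show Matrix.SpecialLinearGroup (Fin 3) ℂ from ⟨_, hdet3⟩) : Matrix (Fin 3) (Fin 3) ℂ) = !![2,0,0;0,1,0;0,0,2⁻¹] := rfl
    rw [hc1] at hE1
    rw [hc2] at hE2
    rw [hc3] at hE3
    have ab01 : A 0 0 * B 0 1 + A 0 1 * B 1 1 + A 0 2 * B 2 1 = 0 := by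
      have h := congrFun (congrFun hAB 0) 1
      simp [Matrix.mul_apply, Fin.sum_univ_three, Matrix.one_apply, Matrix.vecHead, Matrix.vecTail] at h
      linear_combination h
    have ab10 : A 1 0 * B 0 0 + A 1 1 * B 1 0 + A 1 2 * B 2 0 = 0 := by
      have h := congrFun (congrFun hAB 1) 0
      simp [Matrix.mul_apply, Fin.sum_univ_three, Matrix.one_apply, Matrix.vecHead, Matrix.vecTail] at h
      linear_combination h
    have ab11 : A 1 0 * B 0 1 + A 1 1 * B 1 1 + A 1 2 * B 2 1 = 1 := by
      have h := congrFun (congrFun hAB 1) 1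
      simp [Matrix.mul_apply, Fin.sum_univ_three, Matrix.one_apply, Matrix.vecHead, Matrix.vecTail] at h
      linear_combination h
    have ab20 : A 2 0 * B 0 0 + A 2 1 * B 1 0 + A 2 2 * B 2 0 = 0 := by
      have h := congrFun (congrFun hAB 2) 0
      simp [Matrix.mul_apply, Fin.sum_univ_three, Matrix.one_apply, Matrix.vecHead, Matrix.vecTail] at h
      linear_combination h
    have ab21 : A 2 0 * B 0 1 + A 2 1 * B 1 1 + A 2 2 * B 2 1 = 0 := by
      have h := congrFun (congrFun hAB 2) 1
      simp [Matrix.mul_apply, Fin.sum_univ_three, Matrix.one_apply, Matrix.vecHead, Matrix.vecTail] at h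
      linear_combination h
    have ba00 : B 0 0 * A 0 0 + B 0 1 * A 1 0 + B 0 2 * A 2 0 = 1 := by
      have h := congrFun (congrFun hBA 0) 0
      simp [Matrix.mul_apply, Fin.sum_univ_three, Matrix.one_apply, Matrix.vecHead, Matrix.vecTail] at h
      linear_combination h
    have ba01 : B 0 0 * A 0 1 + B 0 1 * A 1 1 + B 0 2 * A 2 1 = 0 := by
      have h := congrFun (congrFun hBA 0) 1
      simp [Matrix.mul_apply, Fin.sum_univ_three, Matrix.one_apply, Matrix.vecHead, Matrix.vecTail] at h
      linear_combination h
    have ba10 : B 1 0 * A 0 0 + B 1 1 * A 1 0 + B 1 2 * A 2 0 = 0 := by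
      have h := congrFun (congrFun hBA 1) 0
      simp [Matrix.mul_apply, Fin.sum_univ_three, Matrix.one_apply, Matrix.vecHead, Matrix.vecTail] at h
      linear_combination h
    have ba20 : B 2 0 * A 0 0 + B 2 1 * A 1 0 + B 2 2 * A 2 0 = 0 := by
      have h := congrFun (congrFun hBA 2) 0
      simp [Matrix.mul_apply, Fin.sum_univ_three, Matrix.one_apply, Matrix.vecHead, Matrix.vecTail] at h
      linear_combination h
    have ba21 : B 2 0 * A 0 1 + B 2 1 * A 1 1 + B 2 2 * A 2 1 = 0 := by
      have h := congrFun (congrFun hBA 2) 1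
      simp [Matrix.mul_apply, Fin.sum_univ_three, Matrix.one_apply, Matrix.vecHead, Matrix.vecTail] at h
      linear_combination h
    have ba22 : B 2 0 * A 0 2 + B 2 1 * A 1 2 + B 2 2 * A 2 2 = 1 := by
      have h := congrFun (congrFun hBA 2) 2
      simp [Matrix.mul_apply, Fin.sum_univ_three, Matrix.one_apply, Matrix.vecHead, Matrix.vecTail] at h
      linear_combination h
    -- entry equations from the conjugation conditions
    have f1a : A 0 0 * B 2 1 = 0 := by
      have h := congrFun (congrFun hE1 0) 1
      simp [Matrix.mul_apply, Fin.sum_univ_three, Matrix.vecHead, Matrix.vecTail] at h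
      linear_combination h - ab01
    have f1b : A 1 0 * B 2 1 = 0 := by
      have h := congrFun (congrFun hE1 1) 1
      simp [Matrix.mul_apply, Fin.sum_univ_three, Matrix.vecHead, Matrix.vecTail] at h
      linear_combination h - ab11
    have f1c : A 2 0 * B 2 1 = 0 := by
      have h := congrFun (congrFun hE1 2) 1
      simp [Matrix.mul_apply, Fin.sum_univ_three, Matrix.vecHead, Matrix.vecTail] at h
      linear_combination h - ab21
    have f1d : A 1 0 * B 2 0 = 0 := by
      have h := congrFun (congrFun hE1 1) 0
      simp [Matrix.mul_apply, Fin.sum_univ_three, Matrix.vecHead, Matrix.vecTail] at h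
      linear_combination h - ab10
    have f1e : A 2 0 * B 2 0 = 0 := by
      have h := congrFun (congrFun hE1 2) 0
      simp [Matrix.mul_apply, Fin.sum_univ_three, Matrix.vecHead, Matrix.vecTail] at h
      linear_combination h - ab20
    have f2d : A 1 1 * B 2 0 = 0 := by
      have h := congrFun (congrFun hE2 1) 0
      simp [Matrix.mul_apply, Fin.sum_univ_three, Matrix.vecHead, Matrix.vecTail] at h
      linear_combination h - ab10
    have f2e : A 2 1 * B 2 0 = 0 := by
      have h := congrFun (congrFun hE2 2) 0
      simp [Matrix.mul_apply, Fin.sum_univ_three, Matrix.vecHead, Matrix.vecTail] at h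
      linear_combination h - ab20
    -- Step 1 : B 2 1 = 0
    have hB21 : B 2 1 = 0 := by
      by_contra hne
      have h1 : A 0 0 = 0 := (mul_eq_zero.1 f1a).resolve_right hne
      have h2 : A 1 0 = 0 := (mul_eq_zero.1 f1b).resolve_right hne
      have h3 : A 2 0 = 0 := (mul_eq_zero.1 f1c).resolve_right hne
      rw [h1, h2, h3] at ba00
      simp at ba00
    -- Step 2 : B 2 0 = 0
    have hB20 : B 2 0 = 0 := by
      by_contra hne
      have h1 : A 1 0 = 0 := (mul_eq_zero.1 f1d).resolve_right hne
      have h2 : A 2 0 = 0 := (mul_eq_zero.1 f1e).resolve_right hne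
      have h3 : A 1 1 = 0 := (mul_eq_zero.1 f2d).resolve_right hne
      have h4 : A 2 1 = 0 := (mul_eq_zero.1 f2e).resolve_right hne
      have h5 : A 1 2 = 0 := by
        have h : A 1 2 * B 2 0 = 0 := by linear_combination ab10 - B 0 0 * h1 - B 1 0 * h3
        exact (mul_eq_zero.1 h).resolve_right hne
      rw [h1, h3, h5] at ab11
      simp at ab11
    -- Step 3 : last row of A
    have hB22A22 : B 2 2 * A 2 2 = 1 := by
      linear_combination ba22 - A 0 2 * hB20 - A 1 2 * hB21
    have hB22ne : B 2 2 ≠ 0 := left_ne_zero_of_mul_eq_one hB22A22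
    have hA20 : A 2 0 = 0 := by
      have h : B 2 2 * A 2 0 = 0 := by linear_combination ba20 - A 0 0 * hB20 - A 1 0 * hB21
      exact (mul_eq_zero.1 h).resolve_left hB22ne
    have hA21 : A 2 1 = 0 := by
      have h : B 2 2 * A 2 1 = 0 := by linear_combination ba21 - A 0 1 * hB20 - A 1 1 * hB21
      exact (mul_eq_zero.1 h).resolve_left hB22ne
    -- equations from the diagonal element n3
    have f3a : A 1 0 * B 0 1 = 0 := by
      have h := congrFun (congrFun hE3 1) 1
      simp [Matrix.mul_apply, Fin.sum_univ_three, Matrix.vecHead, Matrix.vecTail] at h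
      linear_combination h - ab11 + 2⁻¹ * A 1 2 * hB21
    have f3b : A 1 0 * B 0 0 = 0 := by
      have h := congrFun (congrFun hE3 1) 0
      simp [Matrix.mul_apply, Fin.sum_univ_three, Matrix.vecHead, Matrix.vecTail] at h
      linear_combination h - ab10 + 2⁻¹ * A 1 2 * hB20
    have f3c : A 0 0 * B 0 1 = 0 := by
      have h := congrFun (congrFun hE3 0) 1
      simp [Matrix.mul_apply, Fin.sum_univ_three, Matrix.vecHead, Matrix.vecTail] at h
      linear_combination h - ab01 + 2⁻¹ * A 0 2 * hB21
    -- Step 4 : A 1 0 = 0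
    have hA10 : A 1 0 = 0 := by
      by_contra hne
      have h1 : B 0 0 = 0 := (mul_eq_zero.1 f3b).resolve_left hne
      have h2 : B 0 1 = 0 := (mul_eq_zero.1 f3a).resolve_left hne
      rw [h1, h2, hA20] at ba00
      simp at ba00
    -- Step 5 : A 0 1 = 0
    have hB00A00 : B 0 0 * A 0 0 = 1 := by
      linear_combination ba00 - B 0 1 * hA10 - B 0 2 * hA20
    have hA00ne : A 0 0 ≠ 0 := right_ne_zero_of_mul_eq_one hB00A00
    have hB00ne : B 0 0 ≠ 0 := left_ne_zero_of_mul_eq_one hB00A00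
    have hB01 : B 0 1 = 0 := (mul_eq_zero.1 f3c).resolve_left hA00ne
    have hA01 : A 0 1 = 0 := by
      have h : B 0 0 * A 0 1 = 0 := by linear_combination ba01 - A 1 1 * hB01 - B 0 2 * hA21
      exact (mul_eq_zero.1 h).resolve_left hB00ne
    -- conclude
    have hdet := g.prop
    rw [← hAdef, Matrix.det_fin_three] at hdet
    rw [hK]
    refine ⟨A 0 0, A 1 1, A 2 2, A 0 2, A 1 2, ?_, ?_⟩
    · linear_combination hdet + (A 0 0 * A 1 2) * hA21 + (A 1 0 * A 2 2 - A 1 2 * A 2 0) * hA01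
        - (A 0 2 * A 2 1) * hA10 + (A 0 2 * A 1 1) * hA20
    · rw [← hAdef]
      conv_lhs => rw [Matrix.eta_fin_three A]
      rw [hA01, hA10, hA20, hA21]
  · -- K ≤ normalizer
    have hGinvmem : ∀ g : Matrix.SpecialLinearGroup (Fin 3) ℂ, g ∈ K → g⁻¹ ∈ K := by
      intro g hg
      obtain ⟨t₁, t₂, t₃, a, b, hprod, hA⟩ := (hK g).1 hg
      have ht₁ : t₁ ≠ 0 := by intro h; rw [h] at hprod; simp at hprod
      have ht₂ : t₂ ≠ 0 := by intro h; rw [h] at hprod; simp at hprod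
      have ht₃ : t₃ ≠ 0 := by intro h; rw [h] at hprod; simp at hprod
      have hmul : (g : Matrix (Fin 3) (Fin 3) ℂ) *
          !![t₁⁻¹, 0, -a * (t₁*t₃)⁻¹; 0, t₂⁻¹, -b * (t₂*t₃)⁻¹; 0, 0, t₃⁻¹] = 1 := by
        rw [hA, Matrix.mul_fin_three, Matrix.one_fin_three]
        ext i j
        fin_cases i <;> fin_cases j <;> simp <;> field_simp <;> ring
      have hGinv : ((g⁻¹ : Matrix.SpecialLinearGroup (Fin 3) ℂ) : Matrix (Fin 3) (Fin 3) ℂ) =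
          !![t₁⁻¹, 0, -a * (t₁*t₃)⁻¹; 0, t₂⁻¹, -b * (t₂*t₃)⁻¹; 0, 0, t₃⁻¹] := by
        have h1 : ((g⁻¹ : Matrix.SpecialLinearGroup (Fin 3) ℂ) : Matrix (Fin 3) (Fin 3) ℂ)
            * (g : Matrix (Fin 3) (Fin 3) ℂ) = 1 := by
          rw [← Matrix.SpecialLinearGroup.coe_mul, inv_mul_cancel]; simp
        calc ((g⁻¹ : Matrix.SpecialLinearGroup (Fin 3) ℂ) : Matrix (Fin 3) (Fin 3) ℂ)
            = ↑(g⁻¹) * ((g : Matrix (Fin 3) (Fin 3) ℂ) *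
              !![t₁⁻¹, 0, -a * (t₁*t₃)⁻¹; 0, t₂⁻¹, -b * (t₂*t₃)⁻¹; 0, 0, t₃⁻¹]) := by
              rw [hmul, mul_one]
          _ = (↑(g⁻¹) * (g : Matrix (Fin 3) (Fin 3) ℂ)) *
              !![t₁⁻¹, 0, -a * (t₁*t₃)⁻¹; 0, t₂⁻¹, -b * (t₂*t₃)⁻¹; 0, 0, t₃⁻¹] := by
              rw [mul_assoc]
          _ = _ := by rw [h1, one_mul]
      rw [hK]
      refine ⟨t₁⁻¹, t₂⁻¹, t₃⁻¹, -a * (t₁*t₃)⁻¹, -b * (t₂*t₃)⁻¹, ?_, hGinv⟩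
      rw [← mul_inv, ← mul_inv, hprod, inv_one]
    have key : ∀ g n : Matrix.SpecialLinearGroup (Fin 3) ℂ, g ∈ K → n ∈ H → g * n * g⁻¹ ∈ H := by
      rintro g n hg hn
      obtain ⟨t₁, t₂, t₃, a, b, hprod, hA⟩ := (hK g).1 hg
      obtain ⟨t, x, y, hN⟩ := (hH n).1 hn
      have ht₁ : t₁ ≠ 0 := by intro h; rw [h] at hprod; simp at hprod
      have ht₂ : t₂ ≠ 0 := by intro h; rw [h] at hprod; simp at hprod
      have ht₃ : t₃ ≠ 0 := by intro h; rw [h] at hprod; simp at hprod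
      have ht : (t : ℂ) ≠ 0 := t.ne_zero
      have hmul : (g : Matrix (Fin 3) (Fin 3) ℂ) *
          !![t₁⁻¹, 0, -a * (t₁*t₃)⁻¹; 0, t₂⁻¹, -b * (t₂*t₃)⁻¹; 0, 0, t₃⁻¹] = 1 := by
        rw [hA, Matrix.mul_fin_three, Matrix.one_fin_three]
        ext i j
        fin_cases i <;> fin_cases j <;> simp <;> field_simp <;> ring
      have hGinv : ((g⁻¹ : Matrix.SpecialLinearGroup (Fin 3) ℂ) : Matrix (Fin 3) (Fin 3) ℂ) =
          !![t₁⁻¹, 0, -a * (t₁*t₃)⁻¹; 0, t₂⁻¹, -b * (t₂*t₃)⁻¹; 0, 0, t₃⁻¹] := by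
        have h1 : ((g⁻¹ : Matrix.SpecialLinearGroup (Fin 3) ℂ) : Matrix (Fin 3) (Fin 3) ℂ)
            * (g : Matrix (Fin 3) (Fin 3) ℂ) = 1 := by
          rw [← Matrix.SpecialLinearGroup.coe_mul, inv_mul_cancel]; simp
        calc ((g⁻¹ : Matrix.SpecialLinearGroup (Fin 3) ℂ) : Matrix (Fin 3) (Fin 3) ℂ)
            = ↑(g⁻¹) * ((g : Matrix (Fin 3) (Fin 3) ℂ) *
              !![t₁⁻¹, 0, -a * (t₁*t₃)⁻¹; 0, t₂⁻¹, -b * (t₂*t₃)⁻¹; 0, 0, t₃⁻¹]) := by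
              rw [hmul, mul_one]
          _ = (↑(g⁻¹) * (g : Matrix (Fin 3) (Fin 3) ℂ)) *
              !![t₁⁻¹, 0, -a * (t₁*t₃)⁻¹; 0, t₂⁻¹, -b * (t₂*t₃)⁻¹; 0, 0, t₃⁻¹] := by
              rw [mul_assoc]
          _ = _ := by rw [h1, one_mul]
      rw [hH]
      refine ⟨t, t₁*x*t₃⁻¹ + a*(t : ℂ)⁻¹*t₃⁻¹ - a*(t : ℂ)*t₃⁻¹,
        t₂*y*t₃⁻¹ + b*(t : ℂ)⁻¹*t₃⁻¹ - b*t₃⁻¹, ?_⟩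
      rw [Matrix.SpecialLinearGroup.coe_mul, Matrix.SpecialLinearGroup.coe_mul, hGinv, hA, hN,
        Matrix.mul_fin_three, Matrix.mul_fin_three]
      ext i j
      fin_cases i <;> fin_cases j <;> simp <;> field_simp <;> ring
    intro g hg
    rw [Subgroup.mem_normalizer_iff]
    intro n
    constructor
    · exact fun hn => key g n hg hn
    · intro hc
      have := key g⁻¹ (g * n * g⁻¹) (hGinvmem g hg) hc
      simpa [mul_assoc] using this
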